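/- For all integers k ≥ 3, Δ ≥ k + 1, and C ≥ k·Δ, the following inequality holds: Σ_{i=k+1}^{Δ} binom(Δ, i) · binom(C, i) · (i/C)^{i·k} ≤ Δ · (e² / k^{k−1})^{k+1}. -/

import Mathlib

/-- Standard estimate: `binom(n, i) ≤ (e·n/i)^i`. -/
lemma choose_le_exp_pow (n i : ℕ) (hi : 0 < i) :
    (n.choose i : ℝ) ≤ (Real.exp 1 * n / i) ^ i := by
  have hipos : (0 : ℝ) < (i : ℝ) := by exact_mod_cast hi
  have hfac : (0 : ℝ) < (Nat.factorial i : ℝ) := by exact_mod_cast i.factorial_pos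
  -- choose n i * i! ≤ n^i
  have h1 : (n.choose i : ℝ) * (Nat.factorial i : ℝ) ≤ (n : ℝ) ^ i := by
    have := Nat.descFactorial_le_pow n i
    rw [Nat.descFactorial_eq_factorial_mul_choose] at this
    calc (n.choose i : ℝ) * (Nat.factorial i : ℝ)
        = ((Nat.factorial i * n.choose i : ℕ) : ℝ) := by push_cast; ring
      _ ≤ (n : ℝ) ^ i := by exact_mod_cast this
  -- i^i ≤ e^i * i!
  have h2 : (i : ℝ) ^ i ≤ Real.exp 1 ^ i * (Nat.factorial i : ℝ) := by
    have := Real.pow_div_factorial_le_exp (x := (i : ℝ)) hipos.le i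
    rw [div_le_iff₀ hfac] at this
    calc (i : ℝ) ^ i ≤ Real.exp i * (Nat.factorial i : ℝ) := this
      _ = Real.exp 1 ^ i * (Nat.factorial i : ℝ) := by
          rw [← Real.exp_nat_mul, mul_one]
  have hchoose : (0 : ℝ) ≤ (n.choose i : ℝ) := by positivity
  have key : (n.choose i : ℝ) * (i : ℝ) ^ i ≤ Real.exp 1 ^ i * (n : ℝ) ^ i := by
    calc (n.choose i : ℝ) * (i : ℝ) ^ i
        ≤ (n.choose i : ℝ) * (Real.exp 1 ^ i * (Nat.factorial i : ℝ)) :=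
          mul_le_mul_of_nonneg_left h2 hchoose
      _ = Real.exp 1 ^ i * ((n.choose i : ℝ) * (Nat.factorial i : ℝ)) := by ring
      _ ≤ Real.exp 1 ^ i * (n : ℝ) ^ i :=
          mul_le_mul_of_nonneg_left h1 (by positivity)
  rw [div_pow, mul_pow, le_div_iff₀ (by positivity)]
  linarith [key]

/-- For all integers `k ≥ 3`, `Δ ≥ k + 1`, and `C ≥ k·Δ`:
`Σ_{i=k+1}^{Δ} binom(Δ, i) · binom(C, i) · (i/C)^{i·k} ≤ Δ · (e² / k^{k-1})^{k+1}`,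
where `e` is Euler's number and the inequality is over the reals. -/
theorem random_menu_sum_estimate
    (k Δ C : ℕ) (hk : 3 ≤ k) (hΔ : k + 1 ≤ Δ) (hC : k * Δ ≤ C) :
    ∑ i ∈ Finset.Icc (k + 1) Δ,
        (Δ.choose i : ℝ) * (C.choose i : ℝ) * (((i : ℝ) / (C : ℝ)) ^ (i * k)) ≤
      (Δ : ℝ) * ((Real.exp 1 ^ 2 / (k : ℝ) ^ (k - 1)) ^ (k + 1)) := by
  have hCpos : 0 < C := by nlinarith
  have hkpos : (0:ℝ) < (k:ℝ) := by exact_mod_cast (by omega : 0 < k)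
  have hCr : (0:ℝ) < (C:ℝ) := by exact_mod_cast hCpos
  set r : ℝ := Real.exp 1 ^ 2 / (k : ℝ) ^ (k - 1) with hr
  have hr0 : 0 ≤ r := by positivity
  have hr1 : r ≤ 1 := by
    rw [hr, div_le_one (by positivity)]
    have he : Real.exp 1 ^ 2 < 9 := by
      nlinarith [Real.exp_one_lt_d9, Real.exp_pos 1]
    have hk9 : (9:ℝ) ≤ (k:ℝ) ^ (k-1) := by
      calc (9:ℝ) = 3 ^ 2 := by norm_num
        _ ≤ (k:ℝ) ^ 2 := by
            apply pow_le_pow_left₀ (by norm_num)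
            exact_mod_cast hk
        _ ≤ (k:ℝ) ^ (k-1) := by
            apply pow_le_pow_right₀ (by exact_mod_cast (by omega : 1 ≤ k))
            omega
    linarith
  -- bound each term
  have hterm : ∀ i ∈ Finset.Icc (k + 1) Δ,
      (Δ.choose i : ℝ) * (C.choose i : ℝ) * (((i : ℝ) / (C : ℝ)) ^ (i * k)) ≤ r ^ (k+1) := by
    intro i hi
    rw [Finset.mem_Icc] at hi
    have hipos : 0 < i := by omega
    have hir : (0:ℝ) < (i:ℝ) := by exact_mod_cast hipos
    set x : ℝ := (Real.exp 1 * Δ / i) * (Real.exp 1 * C / i) * ((i:ℝ)/(C:ℝ))^k with hx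
    have hx0 : 0 ≤ x := by positivity
    have step1 : (Δ.choose i : ℝ) * (C.choose i : ℝ) * (((i : ℝ) / (C : ℝ)) ^ (i * k))
        ≤ x ^ i := by
      have h1 := choose_le_exp_pow Δ i hipos
      have h2 := choose_le_exp_pow C i hipos
      have hp : (((i : ℝ) / (C : ℝ)) ^ (i * k)) = (((i:ℝ)/(C:ℝ))^k)^i := by
        rw [← pow_mul, mul_comm]
      rw [hp, hx, mul_pow, mul_pow]
      have hA : (0:ℝ) ≤ (Δ.choose i : ℝ) := by positivity
      have hB : (0:ℝ) ≤ (C.choose i : ℝ) := by positivity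
      have hP : (0:ℝ) ≤ (((i:ℝ)/(C:ℝ))^k)^i := by positivity
      have h12 : (Δ.choose i : ℝ) * (C.choose i : ℝ)
          ≤ (Real.exp 1 * Δ / i)^i * (Real.exp 1 * C / i)^i :=
        mul_le_mul h1 h2 hB (by positivity)
      exact mul_le_mul_of_nonneg_right h12 hP
    have step2 : x ≤ r := by
      -- key nat inequality: Δ*C*i^k*k^(k-1) ≤ i^2*C^k
      have hnat : Δ * C * i^k * k^(k-1) ≤ i^2 * C^k := by
        have h1 : i^k = i^2 * i^(k-2) := by
          rw [← pow_add]; congr 1; omega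
        have h2 : i^(k-2) ≤ Δ^(k-2) := Nat.pow_le_pow_left hi.2 _
        have h3 : Δ * Δ^(k-2) * k^(k-1) = (k*Δ)^(k-1) := by
          rw [mul_pow]
          have : Δ * Δ^(k-2) = Δ^(k-1) := by
            rw [← pow_succ']; congr 1; omega
          rw [this]; ring
        have h4 : (k*Δ)^(k-1) ≤ C^(k-1) := Nat.pow_le_pow_left hC _
        have h5 : C^(k-1) * C = C^k := by
          rw [← pow_succ]; congr 1; omega
        calc Δ * C * i^k * k^(k-1) = (Δ * (i^2 * i^(k-2)) * k^(k-1)) * C := by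
              rw [h1]; ring
          _ ≤ (Δ * (i^2 * Δ^(k-2)) * k^(k-1)) * C := by
              apply Nat.mul_le_mul_right
              apply Nat.mul_le_mul_right
              exact Nat.mul_le_mul_left _ (Nat.mul_le_mul_left _ h2)
          _ = i^2 * ((Δ * Δ^(k-2) * k^(k-1)) * C) := by ring
          _ = i^2 * ((k*Δ)^(k-1) * C) := by rw [h3]
          _ ≤ i^2 * (C^(k-1) * C) := by
              exact Nat.mul_le_mul_left _ (Nat.mul_le_mul_right _ h4)
          _ = i^2 * C^k := by rw [h5]
      have hnatr : (Δ:ℝ) * C * (i:ℝ)^k * (k:ℝ)^(k-1) ≤ (i:ℝ)^2 * (C:ℝ)^k := by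
        exact_mod_cast hnat
      have hxeq : x = Real.exp 1 ^ 2 * ((Δ:ℝ) * C * (i:ℝ)^k) / ((i:ℝ)^2 * (C:ℝ)^k) := by
        have he : Real.exp 1 ^ 2 = Real.exp 2 := by
          rw [← Real.exp_nat_mul]; norm_num
        rw [hx, div_pow]
        field_simp
      rw [hxeq, hr, div_le_div_iff₀ (by positivity) (by positivity)]
      have he2 : (0:ℝ) ≤ Real.exp 1 ^ 2 := by positivity
      nlinarith [mul_le_mul_of_nonneg_left hnatr he2]
    calc (Δ.choose i : ℝ) * (C.choose i : ℝ) * (((i : ℝ) / (C : ℝ)) ^ (i * k))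
        ≤ x ^ i := step1
      _ ≤ r ^ i := pow_le_pow_left₀ hx0 step2 i
      _ ≤ r ^ (k+1) := pow_le_pow_of_le_one hr0 hr1 hi.1
  calc ∑ i ∈ Finset.Icc (k + 1) Δ,
        (Δ.choose i : ℝ) * (C.choose i : ℝ) * (((i : ℝ) / (C : ℝ)) ^ (i * k))
      ≤ ∑ i ∈ Finset.Icc (k + 1) Δ, r ^ (k+1) := Finset.sum_le_sum hterm
    _ = ((Finset.Icc (k + 1) Δ).card : ℝ) * r ^ (k+1) := by
        rw [Finset.sum_const, nsmul_eq_mul]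
    _ ≤ (Δ : ℝ) * r ^ (k+1) := by
        apply mul_le_mul_of_nonneg_right _ (by positivity)
        rw [Nat.card_Icc]
        exact_mod_cast (by omega : Δ + 1 - (k+1) ≤ Δ)
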